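/- Let M ≥ 1, let N = n₁ + ... + n_M, and equip ℝ^N with the graded group operation z = x·y of a Carnot group written in exponential coordinates: z_i = x_i + y_i for degree-1 coordinates, and z_i = x_i + y_i + P_i(x,y) for coordinates of degree k ≥ 2, where P_i is a polynomial each of whose monomials x^μ y^β satisfies |μ|_h + |β|_h = k with μ, β > 0 (|·|_h the homogeneous norm of the multi-index). Then for the quasimetric d₂(x, x·z) := max_k |π_k(z)|^{1/k} there exist constants C < ∞ and r₀ > 0 such that d₂(0, x·z) ≤ r + C·ξ whenever d₂(0,x) ≤ r, d₂(x, x·z) ≤ ξ, and r, ξ ≤ r₀. Equivalently, the union of d₂-balls of radius ξ centered at points of the ball of radius r is contained in the ball of radius r + Cξ. -/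

import Mathlib

/-- The Euclidean norm of the block of coordinates of homogeneous degree `k`. -/
noncomputable def blockNorm {N : ℕ} (deg : Fin N → ℕ) (k : ℕ) (x : Fin N → ℝ) : ℝ :=
  Real.sqrt (∑ i ∈ Finset.univ.filter (fun i => deg i = k), (x i) ^ 2)

/-- The homogeneous quasimetric `d₂` on the graded model `ℝ^N`. -/
noncomputable def d2 {N : ℕ} (M : ℕ) (hM : 1 ≤ M) (deg : Fin N → ℕ)
    (x y : Fin N → ℝ) : ℝ :=
  (Finset.Icc 1 M).sup' (Finset.nonempty_Icc.mpr hM)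
    (fun k => blockNorm deg k (x - y) ^ ((1 : ℝ) / k))

lemma blockNorm_nonneg {N : ℕ} (deg : Fin N → ℕ) (k : ℕ) (x : Fin N → ℝ) :
    0 ≤ blockNorm deg k x := Real.sqrt_nonneg _

lemma blockNorm_neg {N : ℕ} (deg : Fin N → ℕ) (k : ℕ) (x : Fin N → ℝ) :
    blockNorm deg k (-x) = blockNorm deg k x := by
  simp [blockNorm, neg_sq]

lemma abs_le_blockNorm {N : ℕ} (deg : Fin N → ℕ) (x : Fin N → ℝ) (i : Fin N) :
    |x i| ≤ blockNorm deg (deg i) x := by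
  rw [blockNorm, ← Real.sqrt_sq_eq_abs]
  exact Real.sqrt_le_sqrt (Finset.single_le_sum (fun j _ => sq_nonneg (x j)) (by simp))

lemma blockNorm_add_le {N : ℕ} (deg : Fin N → ℕ) (k : ℕ) (x y : Fin N → ℝ) :
    blockNorm deg k (x + y) ≤ blockNorm deg k x + blockNorm deg k y := by
  set s := Finset.univ.filter (fun i => deg i = k)
  have hx : (0:ℝ) ≤ ∑ i ∈ s, x i ^ 2 := Finset.sum_nonneg fun i _ => sq_nonneg _
  have hy : (0:ℝ) ≤ ∑ i ∈ s, y i ^ 2 := Finset.sum_nonneg fun i _ => sq_nonneg _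
  have cs : ∑ i ∈ s, x i * y i ≤ Real.sqrt (∑ i ∈ s, x i ^ 2) * Real.sqrt (∑ i ∈ s, y i ^ 2) := by
    calc ∑ i ∈ s, x i * y i ≤ |∑ i ∈ s, x i * y i| := le_abs_self _
      _ = Real.sqrt ((∑ i ∈ s, x i * y i) ^ 2) := (Real.sqrt_sq_eq_abs _).symm
      _ ≤ Real.sqrt ((∑ i ∈ s, x i ^ 2) * ∑ i ∈ s, y i ^ 2) :=
          Real.sqrt_le_sqrt (Finset.sum_mul_sq_le_sq_mul_sq s _ _)
      _ = _ := Real.sqrt_mul hx _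
  have key : ∑ i ∈ s, (x i + y i) ^ 2 ≤
      (Real.sqrt (∑ i ∈ s, x i ^ 2) + Real.sqrt (∑ i ∈ s, y i ^ 2)) ^ 2 := by
    have e1 : ∑ i ∈ s, (x i + y i) ^ 2
        = (∑ i ∈ s, x i ^ 2) + 2 * (∑ i ∈ s, x i * y i) + ∑ i ∈ s, y i ^ 2 := by
      rw [Finset.mul_sum, ← Finset.sum_add_distrib, ← Finset.sum_add_distrib]
      exact Finset.sum_congr rfl fun i _ => by ring
    rw [e1, add_sq, Real.sq_sqrt hx, Real.sq_sqrt hy]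
    nlinarith [cs]
  calc blockNorm deg k (x + y)
      = Real.sqrt (∑ i ∈ s, (x i + y i) ^ 2) := by simp [blockNorm, s]
    _ ≤ Real.sqrt ((Real.sqrt (∑ i ∈ s, x i ^ 2) + Real.sqrt (∑ i ∈ s, y i ^ 2)) ^ 2) :=
        Real.sqrt_le_sqrt key
    _ = _ := Real.sqrt_sq (by positivity)

lemma blockNorm_le_sum_abs {N : ℕ} (deg : Fin N → ℕ) (k : ℕ) (x : Fin N → ℝ) :
    blockNorm deg k x ≤ ∑ i ∈ Finset.univ.filter (fun i => deg i = k), |x i| := by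
  rw [blockNorm]
  have h : ∑ i ∈ Finset.univ.filter (fun i => deg i = k), x i ^ 2
      ≤ (∑ i ∈ Finset.univ.filter (fun i => deg i = k), |x i|) ^ 2 := by
    have := Finset.sum_sq_le_sq_sum_of_nonneg
      (f := fun i => |x i|) (s := Finset.univ.filter (fun i => deg i = k))
      (fun i _ => abs_nonneg _)
    simpa [sq_abs] using this
  calc Real.sqrt (∑ i ∈ Finset.univ.filter (fun i => deg i = k), x i ^ 2)
      ≤ Real.sqrt ((∑ i ∈ Finset.univ.filter (fun i => deg i = k), |x i|) ^ 2) :=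
        Real.sqrt_le_sqrt h
    _ = _ := Real.sqrt_sq (Finset.sum_nonneg fun i _ => abs_nonneg _)

lemma le_pow_of_rpow_inv_le {b c : ℝ} {k : ℕ} (hb : 0 ≤ b) (hk : k ≠ 0)
    (h : b ^ ((1:ℝ)/k) ≤ c) : b ≤ c ^ k := by
  have h0 : (0:ℝ) ≤ b ^ ((1:ℝ)/k) := Real.rpow_nonneg hb _
  have h1 := pow_le_pow_left₀ h0 h k
  calc b = (b ^ ((1:ℝ)/k)) ^ k := by
        rw [← Real.rpow_natCast (b ^ ((1:ℝ)/k)) k, ← Real.rpow_mul hb,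
          one_div, inv_mul_cancel₀ (by exact_mod_cast hk), Real.rpow_one]
    _ ≤ c ^ k := h1

lemma rpow_inv_le_of_le_pow {b c : ℝ} {k : ℕ} (hb : 0 ≤ b) (hc : 0 ≤ c) (hk : k ≠ 0)
    (h : b ≤ c ^ k) : b ^ ((1:ℝ)/k) ≤ c := by
  have h1 := Real.rpow_le_rpow hb h (by positivity : (0:ℝ) ≤ 1/(k:ℝ))
  rwa [← Real.rpow_natCast c k, ← Real.rpow_mul hc, mul_one_div,
    div_self (by exact_mod_cast hk : (k:ℝ) ≠ 0), Real.rpow_one] at h1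

lemma pow_add_mul_pow_le {s t : ℝ} {k : ℕ} (hs : 0 ≤ s) (ht : 0 ≤ t) (hk : 1 ≤ k) :
    s ^ k + t * s ^ (k - 1) ≤ (s + t) ^ k := by
  obtain ⟨m, rfl⟩ : ∃ m, k = m + 1 := ⟨k - 1, by omega⟩
  calc s ^ (m+1) + t * s ^ (m + 1 - 1) = (s + t) * s ^ m := by
        simp only [Nat.add_sub_cancel]; ring
    _ ≤ (s + t) * (s + t) ^ m := by
        exact mul_le_mul_of_nonneg_left (pow_le_pow_left₀ hs (by linarith) m) (by linarith)
    _ = (s + t) ^ (m+1) := (pow_succ' _ _).symm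

/-- For a graded (Carnot) group product in exponential coordinates—each
coordinate of degree `k` being `x_i + y_i` plus a polynomial whose monomials
`x^μ y^β` satisfy `|μ|_h + |β|_h = k`, `μ, β > 0`—the union of `d₂`-balls of
radius `ξ` centered in the ball of radius `r` lies in the ball of radius
`r + C·ξ`, for `r, ξ ≤ r₀`. -/
theorem stmt_18 {N M : ℕ} (hM : 1 ≤ M) (deg : Fin N → ℕ)
    (hdeg : ∀ i, 1 ≤ deg i ∧ deg i ≤ M)
    (mul : (Fin N → ℝ) → (Fin N → ℝ) → (Fin N → ℝ))
    (hmul : ∀ i : Fin N,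
      ∃ (T : Finset ((Fin N → ℕ) × (Fin N → ℕ))) (c : (Fin N → ℕ) × (Fin N → ℕ) → ℝ),
        (∀ p ∈ T, (∑ j, p.1 j * deg j) + (∑ j, p.2 j * deg j) = deg i ∧
          1 ≤ ∑ j, p.1 j * deg j ∧ 1 ≤ ∑ j, p.2 j * deg j) ∧
        ∀ x y : Fin N → ℝ, mul x y i =
          x i + y i + ∑ p ∈ T, c p * (∏ j, x j ^ p.1 j) * (∏ j, y j ^ p.2 j)) :
    ∃ C r₀ : ℝ, 0 < C ∧ 0 < r₀ ∧
      ∀ (x z : Fin N → ℝ) (r ξ : ℝ), 0 < r → 0 < ξ → r ≤ r₀ → ξ ≤ r₀ →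
        d2 M hM deg 0 x ≤ r → d2 M hM deg 0 z ≤ ξ →
        d2 M hM deg 0 (mul x z) ≤ r + C * ξ := by
  choose T c hT hmulEq using hmul
  set K : ℝ := ∑ i : Fin N, ∑ p ∈ T i, |c i p| with hKdef
  have hK0 : 0 ≤ K := Finset.sum_nonneg fun i _ =>
    Finset.sum_nonneg fun p _ => abs_nonneg _
  refine ⟨K + 1, 1, by linarith, one_pos, ?_⟩
  intro x z r ξ hr hξ hr0 hξ0 hx hz
  -- block bounds for x and z
  have hblock : ∀ (w : Fin N → ℝ) (ρ : ℝ), 0 < ρ → d2 M hM deg 0 w ≤ ρ →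
      ∀ k, 1 ≤ k → k ≤ M → blockNorm deg k w ≤ ρ ^ k := by
    intro w ρ hρ hw k hk1 hkM
    have hmem : k ∈ Finset.Icc 1 M := Finset.mem_Icc.mpr ⟨hk1, hkM⟩
    have h1 : blockNorm deg k (0 - w) ^ ((1:ℝ)/k) ≤ ρ :=
      le_trans (Finset.le_sup' (fun k => blockNorm deg k (0 - w) ^ ((1:ℝ)/k)) hmem) hw
    rw [zero_sub, blockNorm_neg] at h1
    exact le_pow_of_rpow_inv_le (blockNorm_nonneg _ _ _) (by omega) h1
  have hxi : ∀ i, |x i| ≤ r ^ (deg i) := fun i =>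
    (abs_le_blockNorm deg x i).trans (hblock x r hr hx _ (hdeg i).1 (hdeg i).2)
  have hzi : ∀ i, |z i| ≤ ξ ^ (deg i) := fun i =>
    (abs_le_blockNorm deg z i).trans (hblock z ξ hξ hz _ (hdeg i).1 (hdeg i).2)
  -- decompose the product
  set P : Fin N → ℝ := fun i =>
    ∑ p ∈ T i, c i p * (∏ j, x j ^ p.1 j) * (∏ j, z j ^ p.2 j) with hPdef
  have hdecomp : mul x z = x + z + P := funext fun i => by
    rw [hmulEq i x z]; rfl
  refine Finset.sup'_le _ _ fun k hk => ?_
  obtain ⟨hk1, hkM⟩ := Finset.mem_Icc.mp hk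
  have hk0 : k ≠ 0 := by omega
  have hCξ : (0:ℝ) ≤ r + (K + 1) * ξ := by positivity
  apply rpow_inv_le_of_le_pow (blockNorm_nonneg _ _ _) hCξ hk0
  rw [zero_sub, blockNorm_neg, hdecomp]
  -- bound on the polynomial part
  have hP : blockNorm deg k P ≤ K * (ξ * (r + ξ) ^ (k - 1)) := by
    refine (blockNorm_le_sum_abs deg k P).trans ?_
    have step : ∀ i ∈ Finset.univ.filter (fun i => deg i = k),
        |P i| ≤ (∑ p ∈ T i, |c i p|) * (ξ * (r + ξ) ^ (k - 1)) := by
      intro i hi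
      have hik : deg i = k := by simpa using hi
      calc |P i| ≤ ∑ p ∈ T i, |c i p * (∏ j, x j ^ p.1 j) * (∏ j, z j ^ p.2 j)| :=
            Finset.abs_sum_le_sum_abs _ _
        _ ≤ ∑ p ∈ T i, |c i p| * (ξ * (r + ξ) ^ (k - 1)) := by
            refine Finset.sum_le_sum fun p hp => ?_
            obtain ⟨habk, ha1, hb1⟩ := hT i p hp
            set a := ∑ j, p.1 j * deg j
            set b := ∑ j, p.2 j * deg j
            have hX : |∏ j, x j ^ p.1 j| ≤ r ^ a := by
              rw [Finset.abs_prod]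
              calc ∏ j, |x j ^ p.1 j| = ∏ j, |x j| ^ p.1 j := by simp [abs_pow]
                _ ≤ ∏ j, (r ^ deg j) ^ p.1 j :=
                    Finset.prod_le_prod (fun j _ => by positivity)
                      (fun j _ => pow_le_pow_left₀ (abs_nonneg _) (hxi j) _)
                _ = ∏ j, r ^ (p.1 j * deg j) := by
                    exact Finset.prod_congr rfl fun j _ => by
                      rw [← pow_mul, mul_comm]
                _ = r ^ a := (Finset.prod_pow_eq_pow_sum _ _ _)
            have hZ : |∏ j, z j ^ p.2 j| ≤ ξ ^ b := by
              rw [Finset.abs_prod]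
              calc ∏ j, |z j ^ p.2 j| = ∏ j, |z j| ^ p.2 j := by simp [abs_pow]
                _ ≤ ∏ j, (ξ ^ deg j) ^ p.2 j :=
                    Finset.prod_le_prod (fun j _ => by positivity)
                      (fun j _ => pow_le_pow_left₀ (abs_nonneg _) (hzi j) _)
                _ = ∏ j, ξ ^ (p.2 j * deg j) := by
                    exact Finset.prod_congr rfl fun j _ => by
                      rw [← pow_mul, mul_comm]
                _ = ξ ^ b := (Finset.prod_pow_eq_pow_sum _ _ _)
            have hmix : r ^ a * ξ ^ b ≤ ξ * (r + ξ) ^ (k - 1) := by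
              have hrs : r ^ a ≤ (r + ξ) ^ a :=
                pow_le_pow_left₀ hr.le (by linarith) a
              have hb' : ξ ^ b = ξ * ξ ^ (b - 1) := by
                rw [← pow_succ']; congr 1; omega
              have hξs : ξ ^ (b - 1) ≤ (r + ξ) ^ (b - 1) :=
                pow_le_pow_left₀ hξ.le (by linarith) _
              calc r ^ a * ξ ^ b = (r ^ a * ξ ^ (b-1)) * ξ := by rw [hb']; ring
                _ ≤ ((r + ξ) ^ a * (r + ξ) ^ (b-1)) * ξ := by
                    refine mul_le_mul_of_nonneg_right ?_ hξ.le
                    exact mul_le_mul hrs hξs (by positivity) (by positivity)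
                _ = ξ * (r + ξ) ^ (k - 1) := by
                    rw [← pow_add]
                    have : a + (b - 1) = k - 1 := by
                      rw [hik] at habk; omega
                    rw [this]; ring
            calc |c i p * (∏ j, x j ^ p.1 j) * (∏ j, z j ^ p.2 j)|
                = |c i p| * |∏ j, x j ^ p.1 j| * |∏ j, z j ^ p.2 j| := by
                  rw [abs_mul, abs_mul]
              _ ≤ |c i p| * (r ^ a) * (ξ ^ b) := by
                  refine mul_le_mul (mul_le_mul_of_nonneg_left hX (abs_nonneg _)) hZ
                    (abs_nonneg _) (by positivity)
              _ = |c i p| * (r ^ a * ξ ^ b) := by ring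
              _ ≤ |c i p| * (ξ * (r + ξ) ^ (k - 1)) :=
                  mul_le_mul_of_nonneg_left hmix (abs_nonneg _)
        _ = (∑ p ∈ T i, |c i p|) * (ξ * (r + ξ) ^ (k - 1)) := by
            rw [Finset.sum_mul]
    calc ∑ i ∈ Finset.univ.filter (fun i => deg i = k), |P i|
        ≤ ∑ i ∈ Finset.univ.filter (fun i => deg i = k),
            (∑ p ∈ T i, |c i p|) * (ξ * (r + ξ) ^ (k - 1)) := Finset.sum_le_sum step
      _ = (∑ i ∈ Finset.univ.filter (fun i => deg i = k), ∑ p ∈ T i, |c i p|)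
            * (ξ * (r + ξ) ^ (k - 1)) := by rw [Finset.sum_mul]
      _ ≤ K * (ξ * (r + ξ) ^ (k - 1)) := by
          refine mul_le_mul_of_nonneg_right ?_ (by positivity)
          exact Finset.sum_le_sum_of_subset_of_nonneg (Finset.filter_subset _ _)
            (fun i _ _ => Finset.sum_nonneg fun p _ => abs_nonneg _)
  -- assemble
  have tri : blockNorm deg k (x + z + P) ≤
      blockNorm deg k x + blockNorm deg k z + blockNorm deg k P :=
    le_trans (blockNorm_add_le deg k (x + z) P)
      (add_le_add (blockNorm_add_le deg k x z) le_rfl)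
  have hbx := hblock x r hr hx k hk1 hkM
  have hbz := hblock z ξ hξ hz k hk1 hkM
  have hA : r ^ k + ξ ^ k ≤ (r + ξ) ^ k := pow_add_pow_le hr.le hξ.le hk0
  have hB : (r + ξ) ^ k + (K * ξ) * (r + ξ) ^ (k - 1) ≤ ((r + ξ) + K * ξ) ^ k :=
    pow_add_mul_pow_le (by linarith) (by positivity) hk1
  calc blockNorm deg k (x + z + P)
      ≤ r ^ k + ξ ^ k + K * (ξ * (r + ξ) ^ (k - 1)) := by
        refine tri.trans ?_
        exact add_le_add (add_le_add hbx hbz) hP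
    _ ≤ (r + ξ) ^ k + (K * ξ) * (r + ξ) ^ (k - 1) := by
        have : K * (ξ * (r + ξ) ^ (k - 1)) = (K * ξ) * (r + ξ) ^ (k - 1) := by ring
        linarith [hA]
    _ ≤ ((r + ξ) + K * ξ) ^ k := hB
    _ = (r + (K + 1) * ξ) ^ k := by ring_nf
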